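/- For positive semidefinite Hermitian matrices and a rank-one matrix W = w w^H with w ∈ ℂ^n, a Hermitian positive definite matrix Q ∈ ℂ^{m×m}, a matrix G ∈ ℂ^{n×m}, and α > 0, the inequality log₂ det(I + Q^{-1} G^H W G) ≤ log₂(1 + α) holds if and only if G^H W G ⪯ α Q (in the Loewner order). -/

import Mathlib

open Matrix ComplexOrder

lemma my_vecMulVec_mulVec {k : ℕ} (u v x : Fin k → ℂ) :
    vecMulVec u v *ᵥ x = (v ⬝ᵥ x) • u := by
  ext i
  simp [vecMulVec, mulVec, dotProduct, Finset.mul_sum, mul_comm, mul_assoc, mul_left_comm]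

lemma my_sandwich {n m : ℕ} (w : Fin n → ℂ) (G : Matrix (Fin n) (Fin m) ℂ) :
    Gᴴ * vecMulVec w (star w) * G = vecMulVec (Gᴴ *ᵥ w) (star (Gᴴ *ᵥ w)) := by
  have h1 : star (Gᴴ *ᵥ w) = star w ᵥ* G := by
    rw [star_mulVec, conjTranspose_conjTranspose]
  rw [h1, vecMulVec_eq Unit, vecMulVec_eq Unit, ← Matrix.mul_assoc Gᴴ, ← replicateCol_mulVec,
    Matrix.mul_assoc]
  congr 1

lemma my_herm {k : ℕ} (u : Fin k → ℂ) : (vecMulVec u (star u)).IsHermitian := by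
  ext i j
  simp [conjTranspose_apply, vecMulVec_apply, mul_comm]

theorem stmt0 {n m : ℕ} (w : Fin n → ℂ) (G : Matrix (Fin n) (Fin m) ℂ)
    (Q : Matrix (Fin m) (Fin m) ℂ) (hQ : Q.PosDef) (α : ℝ) (hα : 0 < α)
    (W : Matrix (Fin n) (Fin n) ℂ) (hW : W = vecMulVec w (star w)) :
    Real.logb 2 ((1 + Q⁻¹ * (Gᴴ * W * G)).det.re) ≤ Real.logb 2 (1 + α) ↔
      ((α : ℂ) • Q - Gᴴ * W * G).PosSemidef := by
  have hdu : IsUnit Q.det := (Matrix.isUnit_iff_isUnit_det Q).mp hQ.isUnit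
  set u : Fin m → ℂ := Gᴴ *ᵥ w with hu
  have hM : Gᴴ * W * G = vecMulVec u (star u) := by rw [hW]; exact my_sandwich w G
  have hQi : (Q⁻¹).PosDef := hQ.inv
  set T : ℂ := star u ⬝ᵥ Q⁻¹ *ᵥ u with hTdef
  have hT0 : 0 ≤ T := hQi.posSemidef.dotProduct_mulVec_nonneg u
  have hre0 : 0 ≤ T.re := (Complex.nonneg_iff.mp hT0).1
  have him0 : T.im = 0 := (Complex.nonneg_iff.mp hT0).2.symm
  set z : Fin m → ℂ := Q⁻¹ *ᵥ u with hz
  -- basic dot product identities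
  have hzu : star z ⬝ᵥ u = T := by
    rw [hz, star_mulVec, hQi.isHermitian.eq, ← dotProduct_mulVec]
  have hzQx : ∀ x, star z ⬝ᵥ Q *ᵥ x = star u ⬝ᵥ x := by
    intro x
    rw [hz, star_mulVec, hQi.isHermitian.eq, dotProduct_mulVec, vecMul_vecMul,
      Matrix.nonsing_inv_mul Q hdu, vecMul_one]
  have hQz : Q *ᵥ z = u := by
    rw [hz, mulVec_mulVec, Matrix.mul_nonsing_inv Q hdu, one_mulVec]
  -- the quadratic form
  have hquad : ∀ x, star x ⬝ᵥ (((α : ℂ) • Q - vecMulVec u (star u)) *ᵥ x)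
      = (α : ℂ) * (star x ⬝ᵥ Q *ᵥ x) - (star u ⬝ᵥ x) * (star x ⬝ᵥ u) := by
    intro x
    rw [sub_mulVec, dotProduct_sub, smul_mulVec, dotProduct_smul,
      my_vecMulVec_mulVec, dotProduct_smul, smul_eq_mul, smul_eq_mul]
  -- determinant
  have hdet : (1 + Q⁻¹ * (Gᴴ * W * G)).det = 1 + T := by
    rw [hM, vecMulVec_eq Unit, ← Matrix.mul_assoc, ← replicateCol_mulVec,
      det_one_add_replicateCol_mul_replicateRow]
  have hdetre : (1 + Q⁻¹ * (Gᴴ * W * G)).det.re = 1 + T.re := by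
    rw [hdet]; simp
  rw [hdetre, hM, Real.logb_le_logb one_lt_two (by linarith) (by linarith)]
  have hherm : (((α : ℂ) • Q - vecMulVec u (star u))).IsHermitian := by
    unfold Matrix.IsHermitian
    rw [conjTranspose_sub, conjTranspose_smul, hQ.isHermitian.eq, (my_herm u).eq,
      Complex.star_def, Complex.conj_ofReal]
  constructor
  · intro h
    have hTα : T.re ≤ α := by linarith
    refine PosSemidef.of_dotProduct_mulVec_nonneg hherm (fun x => ?_)
    rw [hquad]
    set s : ℂ := star x ⬝ᵥ u with hs
    have hsc : star u ⬝ᵥ x = (starRingEnd ℂ) s := by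
      simp [hs, dotProduct, map_sum, mul_comm]
    set q : ℂ := star x ⬝ᵥ Q *ᵥ x with hq
    have hq0 : 0 ≤ q := hQ.posSemidef.dotProduct_mulVec_nonneg x
    have hqre : 0 ≤ q.re := (Complex.nonneg_iff.mp hq0).1
    have hqim : q.im = 0 := (Complex.nonneg_iff.mp hq0).2.symm
    -- Cauchy-Schwarz: normSq s ≤ T.re * q.re
    have hcs : Complex.normSq s ≤ T.re * q.re := by
      rcases eq_or_lt_of_le hre0 with h0 | hpos
      · -- T = 0 forces u = 0
        have hu0 : u = 0 := by
          by_contra hne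
          have := hQi.dotProduct_mulVec_pos hne
          have : 0 < T.re := (Complex.pos_iff.mp this).1
          linarith [h0]
        have hs0 : s = 0 := by simp [hs, hu0]
        simp [hs0, ← h0]
      · set y : Fin m → ℂ := (T.re : ℂ) • x - (starRingEnd ℂ) s • z with hy
        have h0y : 0 ≤ star y ⬝ᵥ Q *ᵥ y := hQ.posSemidef.dotProduct_mulVec_nonneg y
        have hexp : star y ⬝ᵥ Q *ᵥ y
            = (T.re : ℂ) * ((T.re : ℂ) * q - (starRingEnd ℂ) s * s) := by
          rw [hy, star_sub, star_smul, star_smul, mulVec_sub, mulVec_smul, mulVec_smul,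
            sub_dotProduct, dotProduct_sub, dotProduct_sub]
          simp only [smul_dotProduct, dotProduct_smul, smul_eq_mul, Complex.star_def,
            Complex.conj_conj, Complex.conj_ofReal]
          have hTre : T = (T.re : ℂ) := Complex.eq_re_of_ofReal_le (by exact_mod_cast hT0)
          rw [hQz, hzQx x, hzu, hTre, ← hs, hsc, ← hq]
          simp only [Complex.ofReal_re]
          ring
        rw [hexp] at h0y
        have h2 : 0 ≤ (T.re : ℂ) * q - (starRingEnd ℂ) s * s := by
          rcases Complex.nonneg_iff.mp h0y with ⟨h1, h2⟩
          rw [Complex.nonneg_iff]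
          constructor
          · have := h1
            rw [Complex.mul_re] at this
            simp only [Complex.ofReal_re, Complex.ofReal_im, zero_mul, sub_zero] at this
            nlinarith [hpos]
          · have := h2
            rw [Complex.mul_im] at this
            simp only [Complex.ofReal_re, Complex.ofReal_im, zero_mul, add_zero] at this
            nlinarith [hpos]
        rcases Complex.nonneg_iff.mp h2 with ⟨h3, h4⟩
        simp only [Complex.sub_re, Complex.mul_re, Complex.conj_re, Complex.conj_im,
          Complex.ofReal_re, Complex.ofReal_im, zero_mul, sub_zero, neg_mul] at h3
        have : Complex.normSq s = s.re * s.re + s.im * s.im := rfl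
        nlinarith
    -- conclude
    rw [hsc, Complex.nonneg_iff]
    constructor
    · simp only [Complex.sub_re, Complex.mul_re, Complex.conj_re, Complex.conj_im,
        Complex.ofReal_re, Complex.ofReal_im, zero_mul, sub_zero, neg_mul]
      have : Complex.normSq s = s.re * s.re + s.im * s.im := rfl
      nlinarith
    · simp only [Complex.sub_im, Complex.mul_im, Complex.mul_re, Complex.conj_re,
        Complex.conj_im, Complex.ofReal_re, Complex.ofReal_im, zero_mul, add_zero,
        neg_mul, hqim]
      ring
  · intro h
    have h0 := h.dotProduct_mulVec_nonneg z
    rw [hquad, hQz, hzu, ← hTdef] at h0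
    have h1 := (Complex.nonneg_iff.mp h0).1
    simp only [Complex.sub_re, Complex.mul_re, Complex.ofReal_re, Complex.ofReal_im,
      zero_mul, sub_zero, him0, mul_zero] at h1
    nlinarith
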